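/- Let P = P* ⊔ C ⊔ O be a partition of a finite poset P with min(P) ⊆ P*. A point x = (λ, x_C, x_O) ∈ ℝ^P lies in the marked chain-order polyhedron O_{C,O}(P,λ) if and only if x_O lies in the marked order polyhedron O(P \ C, λ) of the induced subposet P \ C with marked elements P*, and x_C lies in the marked chain polyhedron C(P, λ ⊔ x_O) of P with marked elements P* ⊔ O and marking given by λ on P* and x_O on O. -/

import Mathlib

open Pointwise

open scoped Classical

/-- A saturated chain `a ≺ p₁ ≺ ⋯ ≺ p_r ≺ b` with all interior elements in `C`. -/
def SatChain {P : Type*} [PartialOrder P] (C : Set P) (a b : P) (l : List P) : Prop :=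
  (∀ p ∈ l, p ∈ C) ∧ List.Chain' (· ⋖ ·) (a :: (l ++ [b]))

/-- The marked chain-order polyhedron `O_{C,O}(P,λ) ⊆ ℝ^P`. -/
def MCO {P : Type*} [PartialOrder P] (Pstar C O : Set P) (lam : P → ℝ) : Set (P → ℝ) :=
  {x | (∀ a ∈ Pstar, x a = lam a) ∧ (∀ p ∈ C, 0 ≤ x p) ∧
    ∀ a b l, a ∈ Pstar ∪ O → b ∈ Pstar ∪ O → SatChain C a b l →
      (l.map x).sum ≤ x b - x a}

/-- The marked order polyhedron `O(Q,μ) ⊆ ℝ^Q`. -/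
def MO {Q : Type*} [PartialOrder Q] (Qstar : Set Q) (mu : Q → ℝ) : Set (Q → ℝ) :=
  {x | (∀ a ∈ Qstar, x a = mu a) ∧ ∀ p q : Q, p ≤ q → x p ≤ x q}

lemma exists_satchain_of_le {P : Type*} [PartialOrder P] [Fintype P] (p q : P) (h : p ≤ q) :
    p = q ∨ ∃ L : List P, List.Chain' (· ⋖ ·) (p :: (L ++ [q])) := by
  induction q using WellFoundedLT.induction with
  | _ q IH =>
    rcases eq_or_lt_of_le h with rfl | hlt
    · exact Or.inl rfl
    · have hS : ({r | p ≤ r ∧ r < q} : Set P).Finite := Set.toFinite _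
      have hne : ({r | p ≤ r ∧ r < q} : Set P).Nonempty := ⟨p, le_refl p, hlt⟩
      obtain ⟨r, hr, hmax⟩ := hS.exists_maximalFor id _ hne
      have hcov : r ⋖ q := by
        refine ⟨hr.2, fun s hrs hsq => ?_⟩
        have heq : r = s := le_antisymm hrs.le (hmax ⟨hr.1.trans hrs.le, hsq⟩ hrs.le)
        exact absurd (heq ▸ hrs) (lt_irrefl _)
      rcases IH r hr.2 hr.1 with rfl | ⟨L, hL⟩
      · exact Or.inr ⟨[], List.isChain_pair.mpr hcov⟩
      · refine Or.inr ⟨L ++ [r], ?_⟩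
        have hrw : (p :: ((L ++ [r]) ++ [q])) = (p :: (L ++ [r])) ++ [q] := by simp
        rw [hrw]
        refine List.IsChain.append hL (List.isChain_singleton q) ?_
        intro y hy z hz
        simp at hz
        subst hz
        have hlast : (p :: (L ++ [r])).getLast? = some r := by
          rw [show p :: (L ++ [r]) = (p :: L) ++ [r] by simp, List.getLast?_concat]
        rw [hlast] at hy
        simp at hy; subst hy; exact hcov

lemma chain_mono {P : Type*} [PartialOrder P] (C S : Set P) (x : P → ℝ)
    (hC : ∀ p ∈ C, 0 ≤ x p)
    (hchain : ∀ a b l, a ∈ S → b ∈ S → SatChain C a b l → (l.map x).sum ≤ x b - x a)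
    (hS : ∀ p, p ∉ C → p ∈ S) :
    ∀ n (L : List P), L.length ≤ n → ∀ a ∉ C, ∀ q ∉ C,
      List.Chain' (· ⋖ ·) (a :: (L ++ [q])) → x a ≤ x q := by
  intro n
  induction n with
  | zero =>
    intro L hlen a ha q hq hch
    have : L = [] := List.eq_nil_of_length_eq_zero (Nat.le_zero.mp hlen)
    subst this
    have := hchain a q [] (hS a ha) (hS q hq) ⟨by simp, hch⟩
    simp at this; linarith
  | succ n IH =>
    intro L hlen a ha q hq hch
    set L1 := L.takeWhile (· ∈ C) with hL1
    set rest := L.dropWhile (· ∈ C) with hrest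
    have hsplit : L = L1 ++ rest := List.takeWhile_append_dropWhile.symm
    have hL1C : ∀ p ∈ L1, p ∈ C := by
      intro p hp
      have := List.mem_takeWhile_imp hp
      simpa using this
    match hre : rest with
    | [] =>
      have hLC : ∀ p ∈ L, p ∈ C := by
        rw [hsplit]; simpa using hL1C
      have hsum : (0:ℝ) ≤ (L.map x).sum := by
        apply List.sum_nonneg
        intro y hy
        obtain ⟨p, hp, rfl⟩ := List.mem_map.mp hy
        exact hC p (hLC p hp)
      have := hchain a q L (hS a ha) (hS q hq) ⟨hLC, hch⟩
      linarith
    | r :: L2 =>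
      have hrC : r ∉ C := by
        have := List.head?_dropWhile_not (· ∈ C) L
        rw [← hrest] at this
        simpa using this
      have hch' : List.Chain' (· ⋖ ·) ((a :: L1) ++ (r :: (L2 ++ [q]))) := by
        have : (a :: (L ++ [q])) = (a :: L1) ++ (r :: (L2 ++ [q])) := by
          rw [hsplit]; simp
        rwa [this] at hch
      obtain ⟨h1, h2, hrel⟩ := List.isChain_append.mp hch'
      have hx1 : x a ≤ x r := by
        have hc1 : List.Chain' (· ⋖ ·) (a :: (L1 ++ [r])) := by
          rw [show (a :: (L1 ++ [r])) = (a :: L1) ++ [r] by simp]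
          refine List.IsChain.append h1 (List.isChain_singleton r) ?_
          intro y hy z hz
          simp at hz; subst hz
          exact hrel y hy r (by simp)
        have hsum : (0:ℝ) ≤ (L1.map x).sum := by
          apply List.sum_nonneg
          intro y hy
          obtain ⟨p, hp, rfl⟩ := List.mem_map.mp hy
          exact hC p (hL1C p hp)
        have := hchain a r L1 (hS a ha) (hS r hrC) ⟨hL1C, hc1⟩
        linarith
      have hlen2 : L2.length ≤ n := by
        have : L.length = L1.length + (L2.length + 1) := by
          rw [hsplit]; simp
        omega
      have hx2 : x r ≤ x q := IH L2 hlen2 r hrC q hq h2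
      linarith

theorem mco_fibered {P : Type*} [PartialOrder P] [Fintype P]
    (Pstar C O : Set P) (lam : P → ℝ)
    (hmin : ∀ p : P, IsMin p → p ∈ Pstar)
    (hlam : MonotoneOn lam Pstar)
    (hcover : C ∪ O = Pstarᶜ) (hdisj : Disjoint C O)
    (x : P → ℝ) :
    x ∈ MCO Pstar C O lam ↔
      ((fun q : {p : P // p ∉ C} => x q.1) ∈
          MO {q : {p : P // p ∉ C} | (q : P) ∈ Pstar} (fun q => lam q.1)) ∧
      x ∈ MCO (Pstar ∪ O) C ∅ (fun p => if p ∈ Pstar then lam p else x p) := by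
  have hnotC : ∀ p : P, p ∉ C → p ∈ Pstar ∪ O := by
    intro p hp
    by_cases hps : p ∈ Pstar
    · exact Or.inl hps
    · have : p ∈ C ∪ O := by rw [hcover]; exact hps
      rcases this with h | h
      · exact absurd h hp
      · exact Or.inr h
  constructor
  · rintro ⟨hmark, hpos, hch⟩
    refine ⟨⟨?_, ?_⟩, ?_, ?_, ?_⟩
    · intro a ha; exact hmark a.1 ha
    · rintro p q hpq
      have hle : p.1 ≤ q.1 := hpq
      rcases exists_satchain_of_le p.1 q.1 hle with heq | ⟨L, hL⟩
      · show x p.1 ≤ x q.1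
        rw [heq]
      · exact chain_mono C (Pstar ∪ O) x hpos hch hnotC L.length L le_rfl p.1 p.2 q.1 q.2 hL
    · intro a ha
      rcases ha with h | h
      · simp [h, hmark a h]
      · by_cases hps : a ∈ Pstar
        · simp [hps, hmark a hps]
        · simp [hps]
    · exact hpos
    · intro a b l hA hB hsc
      rw [Set.union_empty] at hA hB
      exact hch a b l hA hB hsc
  · rintro ⟨⟨hmo1, hmo2⟩, hmark, hpos, hch⟩
    refine ⟨?_, hpos, ?_⟩
    · intro a ha
      have := hmark a (Set.mem_union_left _ ha)
      simpa [ha] using this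
    · intro a b l hA hB hsc
      exact hch a b l (Set.mem_union_left _ hA) (Set.mem_union_left _ hB) hsc
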